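/- arXiv:1703.01809 — 2 statements merged into one kernel-verified Lean document; each statement's English description precedes it below -/
import Mathlib

section
/- Let s > 0. Let P₀, P₁, P₂, P₃ be points in the Euclidean plane with |P₀P₁| = |P₁P₂| = |P₂P₃| = s, and let θ₂ be the angle ∠P₀P₁P₂ and θ₃ the angle ∠P₁P₂P₃ (measured as interior angles of the polygonal path). If 2π/3 ≤ θ₂ + θ₃ < π and θ₂, θ₃ > 0, then |P₀P₃| < s. -/
open EuclideanGeometry Real

/-- The planar cross product of two vectors, used to express that a polygonal path
turns consistently (convexity of the path). -/
noncomputable def planeCross (a b : EuclideanSpace ℝ (Fin 2)) : ℝ :=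
  a 0 * b 1 - a 1 * b 0

section Aux

open RealInnerProductSpace

lemma aux_dist_sq (x y : EuclideanSpace ℝ (Fin 2)) :
    dist x y ^ 2 = (x 0 - y 0) ^ 2 + (x 1 - y 1) ^ 2 := by
  rw [EuclideanSpace.dist_eq, Real.sq_sqrt (by positivity)]
  simp [Fin.sum_univ_two, Real.dist_eq, sq_abs]

lemma aux_cos (p q r : EuclideanSpace ℝ (Fin 2)) (s : ℝ) (hs : 0 < s)
    (h1 : dist p q = s) (h2 : dist q r = s) :
    (p 0 - q 0) * (r 0 - q 0) + (p 1 - q 1) * (r 1 - q 1) = s ^ 2 * Real.cos (∠ p q r) := by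
  have hn1 : ‖p - q‖ = s := by rw [← dist_eq_norm]; exact h1
  have hn2 : ‖r - q‖ = s := by rw [← dist_eq_norm, dist_comm]; exact h2
  have hcos := InnerProductGeometry.cos_angle (p - q) (r - q)
  rw [hn1, hn2] at hcos
  have hinner : ⟪p - q, r - q⟫ = (p 0 - q 0) * (r 0 - q 0) + (p 1 - q 1) * (r 1 - q 1) := by
    simp [PiLp.inner_apply, Fin.sum_univ_two, RCLike.inner_apply]; ring
  rw [EuclideanGeometry.angle, vsub_eq_sub, vsub_eq_sub, hcos, hinner]
  field_simp

/-- The key trigonometric inequality. -/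
lemma aux_trig (a b : ℝ) (ha : 0 < a) (hb : 0 < b) (hab : a + b < π) :
    1 - Real.cos a - Real.cos b + Real.cos (a + b) < 0 := by
  have pa : Real.sin (a / 2) ^ 2 + Real.cos (a / 2) ^ 2 = 1 := Real.sin_sq_add_cos_sq _
  have pb : Real.sin (b / 2) ^ 2 + Real.cos (b / 2) ^ 2 = 1 := Real.sin_sq_add_cos_sq _
  have hca : Real.cos a = 2 * Real.cos (a / 2) ^ 2 - 1 := by
    have h := Real.cos_two_mul (a / 2); rwa [show 2 * (a / 2) = a by ring] at h
  have hcb : Real.cos b = 2 * Real.cos (b / 2) ^ 2 - 1 := by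
    have h := Real.cos_two_mul (b / 2); rwa [show 2 * (b / 2) = b by ring] at h
  have hsa' : Real.sin a = 2 * Real.sin (a / 2) * Real.cos (a / 2) := by
    have h := Real.sin_two_mul (a / 2); rwa [show 2 * (a / 2) = a by ring] at h
  have hsb' : Real.sin b = 2 * Real.sin (b / 2) * Real.cos (b / 2) := by
    have h := Real.sin_two_mul (b / 2); rwa [show 2 * (b / 2) = b by ring] at h
  have hsa : 0 < Real.sin (a / 2) := Real.sin_pos_of_pos_of_lt_pi (by linarith)
    (by nlinarith [Real.pi_pos])
  have hsb : 0 < Real.sin (b / 2) := Real.sin_pos_of_pos_of_lt_pi (by linarith)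
    (by nlinarith [Real.pi_pos])
  have hC : 0 < Real.cos (a / 2) * Real.cos (b / 2) - Real.sin (a / 2) * Real.sin (b / 2) := by
    have h := Real.cos_pos_of_mem_Ioo (show a / 2 + b / 2 ∈ Set.Ioo (-(π/2)) (π/2) from
      ⟨by nlinarith [Real.pi_pos], by linarith⟩)
    rwa [Real.cos_add] at h
  have hE : 1 - Real.cos a - Real.cos b + Real.cos (a + b) =
      -4 * Real.sin (a / 2) * Real.sin (b / 2) *
        (Real.cos (a / 2) * Real.cos (b / 2) - Real.sin (a / 2) * Real.sin (b / 2)) := by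
    rw [Real.cos_add, hca, hcb, hsa', hsb']
    linear_combination (4 * Real.cos (b / 2) ^ 2 - 4) * pa - 4 * Real.sin (a / 2) ^ 2 * pb
  rw [hE]
  nlinarith [mul_pos (mul_pos hsa hsb) hC]

/-- Pure algebra core of the argument. -/
lemma aux_main (s c2 c3 s2 s3 a b c d e f X Y : ℝ) (hs : 0 < s)
    (hu : a ^ 2 + b ^ 2 = s ^ 2) (hv : c ^ 2 + d ^ 2 = s ^ 2) (hw : e ^ 2 + f ^ 2 = s ^ 2)
    (hcos2 : -(a * c + b * d) = s ^ 2 * c2) (hcos3 : -(c * e + d * f) = s ^ 2 * c3)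
    (hs2 : 0 ≤ s2) (hs3 : 0 ≤ s3)
    (p2 : s2 ^ 2 + c2 ^ 2 = 1) (p3 : s3 ^ 2 + c3 ^ 2 = 1)
    (hX : X = a * d - b * c) (hY : Y = c * f - d * e)
    (hconvex : 0 < X * Y)
    (htrig : 1 - c2 - c3 + (c2 * c3 - s2 * s3) < 0) :
    (a + c + e) ^ 2 + (b + d + f) ^ 2 < s ^ 2 := by
  have hsq2 : (a * c + b * d) ^ 2 = (s ^ 2 * c2) ^ 2 := by
    linear_combination (s ^ 2 * c2 - (a * c + b * d)) * hcos2
  have hsq3 : (c * e + d * f) ^ 2 = (s ^ 2 * c3) ^ 2 := by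
    linear_combination (s ^ 2 * c3 - (c * e + d * f)) * hcos3
  have hX2 : X ^ 2 = (s ^ 2 * s2) ^ 2 := by
    have hid : X ^ 2 = (a ^ 2 + b ^ 2) * (c ^ 2 + d ^ 2) - (a * c + b * d) ^ 2 := by
      rw [hX]; ring
    rw [hid, hu, hv, hsq2]; linear_combination (-(s ^ 4)) * p2
  have hY2 : Y ^ 2 = (s ^ 2 * s3) ^ 2 := by
    have hid : Y ^ 2 = (c ^ 2 + d ^ 2) * (e ^ 2 + f ^ 2) - (c * e + d * f) ^ 2 := by
      rw [hY]; ring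
    rw [hid, hv, hw, hsq3]; linear_combination (-(s ^ 4)) * p3
  have hK0 : 0 ≤ s ^ 4 * s2 * s3 := by positivity
  have hXY2 : (X * Y) ^ 2 = (s ^ 4 * s2 * s3) ^ 2 := by
    calc (X * Y) ^ 2 = X ^ 2 * Y ^ 2 := by ring
    _ = (s ^ 2 * s2) ^ 2 * (s ^ 2 * s3) ^ 2 := by rw [hX2, hY2]
    _ = (s ^ 4 * s2 * s3) ^ 2 := by ring
  have hXY : X * Y = s ^ 4 * s2 * s3 := by
    have hfac : (s ^ 4 * s2 * s3 - X * Y) * (s ^ 4 * s2 * s3 + X * Y) = 0 := by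
      linear_combination -hXY2
    rcases mul_eq_zero.mp hfac with h | h
    · linarith
    · linarith
  have hdot : (a * e + b * f) * s ^ 2 = (a * c + b * d) * (c * e + d * f) - X * Y := by
    rw [hX, hY]; linear_combination (-(a * e + b * f)) * hv
  have huw : a * e + b * f = s ^ 2 * (c2 * c3 - s2 * s3) := by
    have hs2ne : s ^ 2 ≠ 0 := by positivity
    have h : (a * e + b * f) * s ^ 2 = (s ^ 2 * (c2 * c3 - s2 * s3)) * s ^ 2 := by
      rw [hdot, hXY]
      linear_combination (-(c * e + d * f)) * hcos2 + (s ^ 2 * c2) * hcos3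
    exact mul_right_cancel₀ hs2ne h
  have hkey : 0 < s ^ 2 * (-(1 - c2 - c3 + (c2 * c3 - s2 * s3))) :=
    mul_pos (by positivity) (by linarith)
  have hexp : (a + c + e) ^ 2 + (b + d + f) ^ 2 =
      3 * s ^ 2 - 2 * (s ^ 2 * c2) - 2 * (s ^ 2 * c3) + 2 * (s ^ 2 * (c2 * c3 - s2 * s3)) := by
    linear_combination hu + hv + hw - 2 * hcos2 - 2 * hcos3 + 2 * huw
  rw [hexp]
  nlinarith [hkey]

end Aux

set_option maxHeartbeats 1000000 in
/-- Let `P₀ P₁ P₂ P₃` be a convex polygonal path in the Euclidean plane consisting of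
three segments of the same length `s`, with interior angles `θ₂ = ∠P₀P₁P₂` and
`θ₃ = ∠P₁P₂P₃`.  If `2π/3 ≤ θ₂ + θ₃ < π` and `θ₂, θ₃ > 0`, then `dist P₀ P₃ < s`. -/
theorem stmt_4 (s : ℝ) (hs : 0 < s) (P₀ P₁ P₂ P₃ : EuclideanSpace ℝ (Fin 2))
    (h01 : dist P₀ P₁ = s) (h12 : dist P₁ P₂ = s) (h23 : dist P₂ P₃ = s)
    (θ₂ θ₃ : ℝ) (hθ₂ : θ₂ = ∠ P₀ P₁ P₂) (hθ₃ : θ₃ = ∠ P₁ P₂ P₃)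
    (hpos₂ : 0 < θ₂) (hpos₃ : 0 < θ₃)
    (hlow : 2 * π / 3 ≤ θ₂ + θ₃) (hhigh : θ₂ + θ₃ < π)
    (hconvex : 0 < planeCross (P₁ - P₀) (P₂ - P₁) * planeCross (P₂ - P₁) (P₃ - P₂)) :
    dist P₀ P₃ < s := by
  have hu : (P₁ 0 - P₀ 0) ^ 2 + (P₁ 1 - P₀ 1) ^ 2 = s ^ 2 := by
    have := aux_dist_sq P₁ P₀; rw [dist_comm P₁ P₀, h01] at this; linarith
  have hv : (P₂ 0 - P₁ 0) ^ 2 + (P₂ 1 - P₁ 1) ^ 2 = s ^ 2 := by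
    have := aux_dist_sq P₂ P₁; rw [dist_comm P₂ P₁, h12] at this; linarith
  have hw : (P₃ 0 - P₂ 0) ^ 2 + (P₃ 1 - P₂ 1) ^ 2 = s ^ 2 := by
    have := aux_dist_sq P₃ P₂; rw [dist_comm P₃ P₂, h23] at this; linarith
  have hcos2 : -((P₁ 0 - P₀ 0) * (P₂ 0 - P₁ 0) + (P₁ 1 - P₀ 1) * (P₂ 1 - P₁ 1))
      = s ^ 2 * Real.cos θ₂ := by
    have := aux_cos P₀ P₁ P₂ s hs h01 h12
    rw [← hθ₂] at this; rw [← this]; ring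
  have hcos3 : -((P₂ 0 - P₁ 0) * (P₃ 0 - P₂ 0) + (P₂ 1 - P₁ 1) * (P₃ 1 - P₂ 1))
      = s ^ 2 * Real.cos θ₃ := by
    have := aux_cos P₁ P₂ P₃ s hs h12 h23
    rw [← hθ₃] at this; rw [← this]; ring
  have hθ₂le : θ₂ ≤ π := hθ₂ ▸ EuclideanGeometry.angle_le_pi _ _ _
  have hθ₃le : θ₃ ≤ π := hθ₃ ▸ EuclideanGeometry.angle_le_pi _ _ _
  have hsin2 : 0 ≤ Real.sin θ₂ := Real.sin_nonneg_of_nonneg_of_le_pi hpos₂.le hθ₂le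
  have hsin3 : 0 ≤ Real.sin θ₃ := Real.sin_nonneg_of_nonneg_of_le_pi hpos₃.le hθ₃le
  have htrig : 1 - Real.cos θ₂ - Real.cos θ₃ +
      (Real.cos θ₂ * Real.cos θ₃ - Real.sin θ₂ * Real.sin θ₃) < 0 := by
    have := aux_trig θ₂ θ₃ hpos₂ hpos₃ hhigh
    rwa [Real.cos_add] at this
  have hconvex' : 0 < ((P₁ 0 - P₀ 0) * (P₂ 1 - P₁ 1) - (P₁ 1 - P₀ 1) * (P₂ 0 - P₁ 0)) *
      ((P₂ 0 - P₁ 0) * (P₃ 1 - P₂ 1) - (P₂ 1 - P₁ 1) * (P₃ 0 - P₂ 0)) := by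
    have h1 : planeCross (P₁ - P₀) (P₂ - P₁)
        = (P₁ 0 - P₀ 0) * (P₂ 1 - P₁ 1) - (P₁ 1 - P₀ 1) * (P₂ 0 - P₁ 0) := by
      simp [planeCross]
    have h2 : planeCross (P₂ - P₁) (P₃ - P₂)
        = (P₂ 0 - P₁ 0) * (P₃ 1 - P₂ 1) - (P₂ 1 - P₁ 1) * (P₃ 0 - P₂ 0) := by
      simp [planeCross]
    rw [← h1, ← h2]; exact hconvex
  have hmain := aux_main s (Real.cos θ₂) (Real.cos θ₃) (Real.sin θ₂) (Real.sin θ₃)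
    (P₁ 0 - P₀ 0) (P₁ 1 - P₀ 1) (P₂ 0 - P₁ 0) (P₂ 1 - P₁ 1) (P₃ 0 - P₂ 0) (P₃ 1 - P₂ 1)
    ((P₁ 0 - P₀ 0) * (P₂ 1 - P₁ 1) - (P₁ 1 - P₀ 1) * (P₂ 0 - P₁ 0))
    ((P₂ 0 - P₁ 0) * (P₃ 1 - P₂ 1) - (P₂ 1 - P₁ 1) * (P₃ 0 - P₂ 0))
    hs hu hv hw hcos2 hcos3 hsin2 hsin3
    (by nlinarith [Real.sin_sq_add_cos_sq θ₂]) (by nlinarith [Real.sin_sq_add_cos_sq θ₃])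
    rfl rfl hconvex' htrig
  have hd03 : dist P₀ P₃ ^ 2 = ((P₁ 0 - P₀ 0) + (P₂ 0 - P₁ 0) + (P₃ 0 - P₂ 0)) ^ 2 +
      ((P₁ 1 - P₀ 1) + (P₂ 1 - P₁ 1) + (P₃ 1 - P₂ 1)) ^ 2 := by
    rw [aux_dist_sq]; ring
  have hlt : dist P₀ P₃ ^ 2 < s ^ 2 := by rw [hd03]; exact hmain
  nlinarith [dist_nonneg (x := P₀) (y := P₃)]
end

section
/- Let T be an equilateral triangle in the plane with side length s. Then for every point x in the interior of T, the distance from x to the set of midpoints of the three sides of T is strictly less than s/2. -/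
open Finset

lemma key_norm (s : ℝ) (u v : EuclideanSpace ℝ (Fin 2)) (hu : ‖u‖ = s) (hv : ‖v‖ = s)
    (huv : ‖u - v‖ = s) (p q : ℝ) :
    ‖p • u + q • v‖ ^ 2 = s ^ 2 * (p ^ 2 + p * q + q ^ 2) := by
  have h1 : ‖u - v‖ ^ 2 = ‖u‖ ^ 2 - 2 * inner ℝ u v + ‖v‖ ^ 2 := norm_sub_sq_real u v
  have hiuv : inner ℝ u v = s ^ 2 / 2 := by rw [hu, hv, huv] at h1; linarith
  have h2 : ‖p • u + q • v‖ ^ 2 = ‖p • u‖ ^ 2 + 2 * inner ℝ (p • u) (q • v) + ‖q • v‖ ^ 2 :=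
    norm_add_sq_real _ _
  rw [h2, norm_smul, norm_smul, real_inner_smul_left, real_inner_smul_right, hiuv, hu, hv]
  simp [mul_pow]
  ring

set_option maxHeartbeats 2000000 in
/-- Let `T` be a (closed) equilateral triangle of side length `s` in the Euclidean
plane.  Every point in the interior of `T` is at distance strictly less than `s/2`
from one of the midpoints of the three sides of `T`. -/
theorem stmt_5 (s : ℝ) (hs : 0 < s) (A B C : EuclideanSpace ℝ (Fin 2))
    (hAB : dist A B = s) (hBC : dist B C = s) (hCA : dist C A = s)
    (x : EuclideanSpace ℝ (Fin 2))
    (hx : x ∈ interior (convexHull ℝ ({A, B, C} : Set (EuclideanSpace ℝ (Fin 2))))) :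
    dist x (midpoint ℝ A B) < s / 2 ∨ dist x (midpoint ℝ B C) < s / 2 ∨
      dist x (midpoint ℝ C A) < s / 2 := by
  -- not collinear
  have hcol : ¬ Collinear ℝ ({A, B, C} : Set (EuclideanSpace ℝ (Fin 2))) := by
    intro h
    rcases h.wbtw_or_wbtw_or_wbtw with hw | hw | hw
    · have := hw.dist_add_dist
      rw [hAB, hBC, dist_comm] at this; rw [hCA] at this; linarith
    · have := hw.dist_add_dist
      rw [hBC, hCA, dist_comm, hAB] at this; linarith
    · have := hw.dist_add_dist
      rw [hCA, hAB, dist_comm, hBC] at this; linarith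
  have hrange : Set.range ![A, B, C] = ({A, B, C} : Set (EuclideanSpace ℝ (Fin 2))) := by
    ext y
    simp only [Set.mem_range, Set.mem_insert_iff, Set.mem_singleton_iff]
    constructor
    · rintro ⟨i, rfl⟩; fin_cases i <;> simp
    · rintro (rfl | rfl | rfl)
      exacts [⟨0, rfl⟩, ⟨1, rfl⟩, ⟨2, rfl⟩]
  have hindep : AffineIndependent ℝ ![A, B, C] := by
    rw [affineIndependent_iff_not_collinear]
    rwa [hrange]
  have hspan : affineSpan ℝ (Set.range ![A, B, C]) = ⊤ := by
    rw [hrange]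
    rw [← interior_convexHull_nonempty_iff_affineSpan_eq_top]
    exact ⟨x, hx⟩
  let b : AffineBasis (Fin 3) ℝ (EuclideanSpace ℝ (Fin 2)) := ⟨![A, B, C], hindep, hspan⟩
  have hxint : ∀ i, 0 < b.coord i x := by
    have := b.interior_convexHull
    have hbr : Set.range ⇑b = ({A, B, C} : Set (EuclideanSpace ℝ (Fin 2))) := hrange
    rw [hbr] at this
    rw [this] at hx
    exact hx
  set a₀ := b.coord 0 x with ha₀
  set a₁ := b.coord 1 x with ha₁
  set a₂ := b.coord 2 x with ha₂
  have hsum : a₀ + a₁ + a₂ = 1 := by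
    have := b.sum_coord_apply_eq_one x
    rw [Fin.sum_univ_three] at this
    exact this
  have hcomb : x = a₀ • A + a₁ • B + a₂ • C := by
    have h := b.affineCombination_coord_eq_self x
    rw [Finset.univ.affineCombination_eq_linear_combination _ _ (b.sum_coord_apply_eq_one x)] at h
    rw [Fin.sum_univ_three] at h
    have hb0 : b 0 = A := rfl
    have hb1 : b 1 = B := rfl
    have hb2 : b 2 = C := rfl
    rw [hb0, hb1, hb2] at h
    exact h.symm
  have h0 := hxint 0
  have h1 := hxint 1
  have h2 := hxint 2
  rw [← ha₀] at h0; rw [← ha₁] at h1; rw [← ha₂] at h2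
  -- vectors
  set u : EuclideanSpace ℝ (Fin 2) := A - C with hu'
  set v : EuclideanSpace ℝ (Fin 2) := B - C with hv'
  have hnu : ‖u‖ = s := by rw [hu', ← dist_eq_norm, ← hCA, dist_comm]
  have hnv : ‖v‖ = s := by rw [hv', ← dist_eq_norm, ← hBC, dist_comm]
  have hnuv : ‖u - v‖ = s := by
    have : u - v = A - B := by rw [hu', hv']; abel
    rw [this, ← dist_eq_norm, hAB]
  have hAC : A = u + C := by rw [hu']; abel
  have hBC' : B = v + C := by rw [hv']; abel
  have key : ∀ (P Q : EuclideanSpace ℝ (Fin 2)) (p q : ℝ),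
      x - midpoint ℝ P Q = p • u + q • v →
      p ^ 2 + p * q + q ^ 2 < 1 / 4 → dist x (midpoint ℝ P Q) < s / 2 := by
    intro P Q p q hrep hlt
    have hd : dist x (midpoint ℝ P Q) = ‖p • u + q • v‖ := by
      rw [dist_eq_norm, hrep]
    rw [hd]
    have hsq : ‖p • u + q • v‖ ^ 2 < (s / 2) ^ 2 := by
      rw [key_norm s u v hnu hnv hnuv p q]
      nlinarith [mul_lt_mul_of_pos_left hlt (show (0:ℝ) < s^2 by positivity)]
    exact lt_of_pow_lt_pow_left₀ 2 (by positivity) hsq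
  have hc : a₂ = 1 - a₀ - a₁ := by linarith
  have hmAB : x - midpoint ℝ A B = (a₀ - 1/2) • u + (a₁ - 1/2) • v := by
    rw [hcomb, hc, midpoint_eq_smul_add, hAC, hBC']
    simp only [smul_add, invOf_eq_inv]
    module
  have hmBC : x - midpoint ℝ B C = a₀ • u + (a₁ - 1/2) • v := by
    rw [hcomb, hc, midpoint_eq_smul_add, hAC, hBC']
    simp only [smul_add, invOf_eq_inv]
    module
  by_cases hc2 : a₂ ≤ 1/2
  · left
    exact key A B _ _ hmAB (by nlinarith [mul_pos h0 h1])
  · right; left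
    have : a₀ < 1/2 := by linarith
    exact key B C _ _ hmBC (by nlinarith [mul_pos h1 h2])
end
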